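/- The space 𝒳 is not a uniform Eberlein compactum: there is no Hilbert space H and no topological embedding of 𝒳 into H equipped with its weak topology. -/

import Mathlib

open Cardinal Filter Topology Set

noncomputable section
open Classical

/-- `ω₁`, the first uncountable ordinal, viewed as the linearly ordered type of
all countable ordinals. -/
abbrev Omega1 : Type 1 := ↥(Set.Iio (Cardinal.aleph 1).ord)

/-- The vertical section `A_α = {β : (α, β) ∈ A}`. -/
def vertSection (A : Set (Omega1 × Omega1)) (α : Omega1) : Set Omega1 :=
  {β | (α, β) ∈ A}

/-- The horizontal section `A^α = {γ : (γ, α) ∈ A}`. -/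
def horSection (A : Set (Omega1 × Omega1)) (α : Omega1) : Set Omega1 :=
  {γ | (γ, α) ∈ A}

/-- Membership in the σ-ideal `𝓘`: for all but countably many `α ∈ ω₁` both the
vertical and the horizontal section of `A` at `α` are countable. -/
def MemIdealI (A : Set (Omega1 × Omega1)) : Prop :=
  {α : Omega1 | ¬ ((vertSection A α).Countable ∧ (horSection A α).Countable)}.Countable

/-- `F` is a finite graph of a strictly decreasing partial function: `F` is finite,
contains no two pairs with the same first coordinate, and whenever
`(α,β), (α',β') ∈ F` with `α < α'` then `β > β'`. -/
def IsDecGraph {T : Type*} [LinearOrder T] (F : Set (T × T)) : Prop :=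
  F.Finite ∧ (∀ p ∈ F, ∀ q ∈ F, p.1 = q.1 → p = q) ∧
    (∀ p ∈ F, ∀ q ∈ F, p.1 < q.1 → q.2 < p.2)

/-- The characteristic function of a set, with values in `{0,1} = Bool`. -/
def chi {T : Type*} (A : Set T) : T → Bool := fun x => if x ∈ A then true else false

/-- The space `𝒳` (over a linear order `T`) of characteristic functions of finite
graphs of strictly decreasing partial functions on `T`, viewed as a subset of the
product space `{0,1}^(T × T)`; it carries the subspace topology. -/
def XSpace (T : Type*) [LinearOrder T] : Set ((T × T) → Bool) :=
  {f | ∃ F : Set (T × T), IsDecGraph F ∧ f = chi F}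

/-- The space `𝒳_B = {A ∈ 𝒳 : A ⊆ B}`, as a subset of `{0,1}^(ω₁ × ω₁)`. -/
def XSpaceIn (B : Set (Omega1 × Omega1)) : Set ((Omega1 × Omega1) → Bool) :=
  {f | ∃ F : Set (Omega1 × Omega1), IsDecGraph F ∧ F ⊆ B ∧ f = chi F}

/-- The support of a point of `{0,1}^T`: the set of which it is the
characteristic function. -/
def supp {T : Type*} (f : T → Bool) : Set T := {x | f x = true}

universe u

-- Chunk 1: Omega1 basics
lemma mk_omega1 : #Omega1 = Cardinal.lift.{1,0} (Cardinal.aleph 1) := by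
  have := Ordinal.mk_Iio_ordinal (Cardinal.aleph 1).ord
  rwa [Cardinal.card_ord] at this

lemma omega1_not_countable : ¬ (Set.univ : Set Omega1).Countable := by
  intro h
  rw [Cardinal.countable_iff_lt_aleph_one, Cardinal.mk_univ, mk_omega1,
    Cardinal.lift_aleph, Ordinal.lift_one] at h
  exact absurd h (lt_irrefl _)

lemma Iic_countable (γ : Omega1) : (Set.Iic γ).Countable := by
  have hγ : γ.1 < (Cardinal.aleph 1).ord := γ.2
  have hc : (Set.Iic γ.1).Countable := by
    rw [Cardinal.countable_iff_lt_aleph_one, ← Order.Iio_succ, Ordinal.mk_Iio_ordinal]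
    have h1 : (Order.succ γ.1).card < Cardinal.aleph 1 := by
      rw [← Cardinal.lt_ord]
      exact (Cardinal.isSuccLimit_ord (Cardinal.aleph0_le_aleph 1)).succ_lt hγ
    rw [show (Cardinal.aleph 1 : Cardinal.{1}) = Cardinal.lift.{1,0} (Cardinal.aleph 1) by
      rw [Cardinal.lift_aleph, Ordinal.lift_one]]
    exact Cardinal.lift_lt.mpr h1
  haveI := hc.to_subtype
  refine Set.Countable.mono ?_
    (Set.countable_range (fun o : ↥(Set.Iic γ.1) => (⟨o.1, lt_of_le_of_lt o.2 hγ⟩ : Omega1)))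
  intro x hx
  exact ⟨⟨x.1, hx⟩, rfl⟩

lemma uncountable_unbounded {S : Set Omega1} (hS : ¬ S.Countable) (γ : Omega1) :
    ∃ x ∈ S, γ < x := by
  by_contra h
  push_neg at h
  exact hS ((Iic_countable γ).mono h)

lemma uncountable_diff_Iic {S : Set Omega1} (hS : ¬ S.Countable) (γ : Omega1) :
    ¬ (S \ Set.Iic γ).Countable := by
  intro h
  refine hS (((h.union (Iic_countable γ))).mono ?_)
  intro x hx
  by_cases hx2 : x ≤ γ
  · exact Or.inr hx2
  · exact Or.inl ⟨hx, hx2⟩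
-- Chunk 2: decreasing graphs, chi, supp
section DecGraph
variable {T : Type*} [LinearOrder T]

/-- The pairwise (local) conditions of a decreasing graph. -/
def DecCond (F : Set (T × T)) : Prop :=
  (∀ p ∈ F, ∀ q ∈ F, p.1 = q.1 → p = q) ∧ (∀ p ∈ F, ∀ q ∈ F, p.1 < q.1 → q.2 < p.2)

lemma DecCond.mono {F G : Set (T × T)} (h : DecCond F) (hsub : G ⊆ F) : DecCond G :=
  ⟨fun p hp q hq => h.1 p (hsub hp) q (hsub hq), fun p hp q hq => h.2 p (hsub hp) q (hsub hq)⟩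

lemma IsDecGraph.decCond {F : Set (T × T)} (h : IsDecGraph F) : DecCond F := ⟨h.2.1, h.2.2⟩

lemma IsDecGraph.mono {F G : Set (T × T)} (h : IsDecGraph F) (hsub : G ⊆ F) : IsDecGraph G :=
  ⟨h.1.subset hsub, (h.decCond.mono hsub).1, (h.decCond.mono hsub).2⟩

end DecGraph

/-- A nonempty set with the pairwise conditions has a pair minimal in second,
maximal in first coordinate. -/
lemma DecCond.exists_corner {G : Set (Omega1 × Omega1)} (hG : DecCond G)
    (hne : G.Nonempty) : ∃ pm ∈ G, ∀ p ∈ G, p ≠ pm → p.1 < pm.1 := by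
  obtain ⟨p₀, hp₀⟩ := hne
  have hne' : (Prod.snd '' G).Nonempty := ⟨p₀.2, p₀, hp₀, rfl⟩
  obtain ⟨β, ⟨pm, hpm, hpmeq⟩, hβmin⟩ :=
    (wellFounded_lt (α := Omega1)).has_min _ hne'
  refine ⟨pm, hpm, ?_⟩
  intro p hp hpne
  have hpβ : pm.2 < p.2 := by
    rcases lt_trichotomy pm.2 p.2 with h1 | h1 | h1
    · exact h1
    · exfalso
      rcases lt_trichotomy p.1 pm.1 with h2 | h2 | h2
      · exact absurd (hG.2 p hp pm hpm h2) (by rw [h1]; exact lt_irrefl _)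
      · exact hpne (hG.1 p hp pm hpm h2)
      · exact absurd (hG.2 pm hpm p hp h2) (by rw [h1]; exact lt_irrefl _)
    · exact hβmin p.2 (Set.mem_image_of_mem Prod.snd hp) (by rw [← hpmeq]; exact h1) |>.elim
  rcases lt_trichotomy p.1 pm.1 with h2 | h2 | h2
  · exact h2
  · exact absurd (hG.1 p hp pm hpm h2) hpne
  · exact absurd (hG.2 pm hpm p hp h2) (not_lt.mpr hpβ.le)

/-- In `Omega1`, the pairwise conditions imply finiteness. -/
lemma DecCond.finite {F : Set (Omega1 × Omega1)} (h : DecCond F) : F.Finite := by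
  have key : ∀ α : Omega1, ∀ G : Set (Omega1 × Omega1), DecCond G →
      (∀ p ∈ G, p.1 < α) → G.Finite := by
    intro α
    induction α using WellFoundedLT.induction with
    | ind α IH =>
      intro G hG hbd
      rcases Set.eq_empty_or_nonempty G with rfl | hne
      · exact Set.finite_empty
      obtain ⟨pm, hpm, hcorner⟩ := hG.exists_corner hne
      have hfin : (G \ {pm}).Finite := by
        refine IH pm.1 (hbd pm hpm) _ (hG.mono Set.diff_subset) ?_
        intro p hp
        exact hcorner p hp.1 hp.2
      refine (hfin.insert pm).subset ?_
      intro p hp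
      by_cases hpe : p = pm
      · exact hpe ▸ Set.mem_insert _ _
      · exact Set.mem_insert_of_mem _ ⟨hp, hpe⟩
  rcases Set.eq_empty_or_nonempty F with rfl | hne
  · exact Set.finite_empty
  obtain ⟨pm, hpm, hcorner⟩ := h.exists_corner hne
  have hfin : (F \ {pm}).Finite :=
    key pm.1 _ (h.mono Set.diff_subset) (fun p hp => hcorner p hp.1 hp.2)
  refine (hfin.insert pm).subset ?_
  intro p hp
  by_cases hpe : p = pm
  · exact hpe ▸ Set.mem_insert _ _
  · exact Set.mem_insert_of_mem _ ⟨hp, hpe⟩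

lemma isDecGraph_iff_decCond {F : Set (Omega1 × Omega1)} : IsDecGraph F ↔ DecCond F :=
  ⟨fun h => h.decCond, fun h => ⟨h.finite, h.1, h.2⟩⟩
-- Chunk 3: chi, supp, XSpace membership and compactness
lemma supp_chi {T : Type*} (A : Set T) : supp (chi A) = A := by
  ext x
  simp [supp, chi]

lemma chi_supp {T : Type*} (f : T → Bool) : chi (supp f) = f := by
  funext x
  simp only [chi, supp, Set.mem_setOf_eq]
  by_cases h : f x = true <;> simp [h]

lemma chi_injective {T : Type*} : Function.Injective (chi (T := T)) := by
  intro A B h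
  rw [← supp_chi A, ← supp_chi B, h]

lemma chi_mem_iff {T : Type*} (A : Set T) (x : T) : chi A x = true ↔ x ∈ A := by
  simp [chi]

lemma mem_xSpace_iff {f : (Omega1 × Omega1) → Bool} :
    f ∈ XSpace Omega1 ↔ DecCond (supp f) := by
  constructor
  · rintro ⟨F, hF, rfl⟩
    rw [supp_chi]
    exact hF.decCond
  · intro h
    exact ⟨supp f, isDecGraph_iff_decCond.mpr h, (chi_supp f).symm⟩

lemma chi_mem_xSpace {F : Set (Omega1 × Omega1)} (h : DecCond F) :
    chi F ∈ XSpace Omega1 := ⟨F, isDecGraph_iff_decCond.mpr h, rfl⟩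

lemma isClosed_xSpace : IsClosed (XSpace Omega1) := by
  have : XSpace Omega1 =
      (⋂ (p : Omega1 × Omega1) (q : Omega1 × Omega1),
        {f : (Omega1 × Omega1) → Bool | f p = true → f q = true →
          (p.1 = q.1 → p = q) ∧ (p.1 < q.1 → q.2 < p.2)}) := by
    ext f
    simp only [Set.mem_iInter, Set.mem_setOf_eq, mem_xSpace_iff]
    constructor
    · intro h p q hp hq
      exact ⟨fun h1 => h.1 p hp q hq h1, fun h1 => h.2 p hp q hq h1⟩
    · intro h
      exact ⟨fun p hp q hq => (h p q hp hq).1, fun p hp q hq => (h p q hp hq).2⟩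
  rw [this]
  refine isClosed_iInter fun p => isClosed_iInter fun q => ?_
  by_cases hc : (p.1 = q.1 → p = q) ∧ (p.1 < q.1 → q.2 < p.2)
  · have : {f : (Omega1 × Omega1) → Bool | f p = true → f q = true →
        (p.1 = q.1 → p = q) ∧ (p.1 < q.1 → q.2 < p.2)} = Set.univ := by
      ext f
      simp only [Set.mem_setOf_eq, Set.mem_univ, iff_true]
      exact fun _ _ => hc
    rw [this]
    exact isClosed_univ
  · have : {f : (Omega1 × Omega1) → Bool | f p = true → f q = true →
        (p.1 = q.1 → p = q) ∧ (p.1 < q.1 → q.2 < p.2)} =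
        {f | ¬ (f p = true ∧ f q = true)} := by
      ext f
      simp only [Set.mem_setOf_eq]
      constructor
      · intro h ⟨h1, h2⟩
        exact hc (h h1 h2)
      · intro h h1 h2
        exact absurd ⟨h1, h2⟩ h
    rw [this]
    have h1 : IsOpen {f : (Omega1 × Omega1) → Bool | f p = true ∧ f q = true} := by
      have hop := (isOpen_discrete {true} : IsOpen ({true} : Set Bool))
      have e1 := (continuous_apply (A := fun _ : Omega1 × Omega1 => Bool) p).isOpen_preimage _ hop
      have e2 := (continuous_apply (A := fun _ : Omega1 × Omega1 => Bool) q).isOpen_preimage _ hop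
      have : {f : (Omega1 × Omega1) → Bool | f p = true ∧ f q = true} =
          ((fun f : (Omega1 × Omega1) → Bool => f p) ⁻¹' {true}) ∩
          ((fun f : (Omega1 × Omega1) → Bool => f q) ⁻¹' {true}) := by
        ext f
        simp
      rw [this]
      exact e1.inter e2
    have : {f : (Omega1 × Omega1) → Bool | ¬ (f p = true ∧ f q = true)} =
        ({f : (Omega1 × Omega1) → Bool | f p = true ∧ f q = true})ᶜ := by
      ext f
      simp
    rw [this]
    exact h1.isClosed_compl

instance : CompactSpace ↥(XSpace Omega1) :=
  isCompact_iff_compactSpace.mp (isClosed_xSpace.isCompact)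
-- Chunk 4: removePt, neighborhoods, transpose
abbrev XP := ↥(XSpace Omega1)

lemma supp_mem_decCond (x : XP) : DecCond (supp x.1) := mem_xSpace_iff.mp x.2

def removeFn (s : Omega1 × Omega1) (f : (Omega1 × Omega1) → Bool) : (Omega1 × Omega1) → Bool :=
  fun t => if t = s then false else f t

lemma supp_removeFn (s : Omega1 × Omega1) (f : (Omega1 × Omega1) → Bool) :
    supp (removeFn s f) = supp f \ {s} := by
  ext t
  simp only [supp, removeFn, Set.mem_setOf_eq, Set.mem_diff, Set.mem_singleton_iff]
  by_cases h : t = s <;> simp [h]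

def removePt (s : Omega1 × Omega1) (x : XP) : XP :=
  ⟨removeFn s x.1, by
    rw [mem_xSpace_iff, supp_removeFn]
    exact (supp_mem_decCond x).mono Set.diff_subset⟩

lemma continuous_removePt (s : Omega1 × Omega1) : Continuous (removePt s) := by
  apply Continuous.subtype_mk
  apply continuous_pi
  intro t
  by_cases h : t = s
  · subst h
    simpa [removeFn] using continuous_const
  · have : (fun x : XP => removeFn s x.1 t) = fun x : XP => x.1 t := by
      funext x
      simp [removeFn, h]
    rw [this]
    exact (continuous_apply t).comp continuous_subtype_val

lemma removePt_val_apply (s : Omega1 × Omega1) (x : XP) (t : Omega1 × Omega1) :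
    (removePt s x).1 t = if t = s then false else x.1 t := rfl

/-- Every neighborhood of `x` in `XP` contains all points agreeing with `x`
on some finite set of coordinates. -/
lemma exists_finset_nbhd (x : XP) {U : Set XP} (hU : U ∈ 𝓝 x) :
    ∃ I : Finset (Omega1 × Omega1), ∀ y : XP, (∀ q ∈ I, y.1 q = x.1 q) → y ∈ U := by
  rw [mem_nhds_subtype] at hU
  obtain ⟨V, hV, hVU⟩ := hU
  rw [nhds_pi, Filter.mem_pi] at hV
  obtain ⟨I, hIfin, t, ht, htV⟩ := hV
  refine ⟨hIfin.toFinset, fun y hy => ?_⟩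
  apply hVU
  refine htV ?_
  intro q hq
  rw [hy q (hIfin.mem_toFinset.mpr hq)]
  have := ht q
  rwa [nhds_discrete Bool, Filter.mem_pure] at this

-- transpose
lemma DecCond.fst_lt_of_snd_lt {F : Set (Omega1 × Omega1)} (h : DecCond F) {p q : Omega1 × Omega1}
    (hp : p ∈ F) (hq : q ∈ F) (hlt : q.2 < p.2) : p.1 < q.1 := by
  rcases lt_trichotomy p.1 q.1 with h1 | h1 | h1
  · exact h1
  · exact absurd (h.1 p hp q hq h1) (by rintro rfl; exact lt_irrefl _ hlt)
  · exact absurd (h.2 q hq p hp h1) (not_lt.mpr hlt.le)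

def transFn (f : (Omega1 × Omega1) → Bool) : (Omega1 × Omega1) → Bool := fun q => f q.swap

lemma transFn_transFn (f : (Omega1 × Omega1) → Bool) : transFn (transFn f) = f := rfl

lemma transFn_mem {f : (Omega1 × Omega1) → Bool} (hf : f ∈ XSpace Omega1) :
    transFn f ∈ XSpace Omega1 := by
  rw [mem_xSpace_iff] at hf ⊢
  have hmem : ∀ q : Omega1 × Omega1, q ∈ supp (transFn f) ↔ q.swap ∈ supp f := by
    intro q
    simp [supp, transFn]
  constructor
  · intro p hp q hq h1
    have hps := (hmem p).mp hp
    have hqs := (hmem q).mp hq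
    -- p.1 = q.1 means second coordinates of the swapped pairs are equal
    rcases lt_trichotomy p.2 q.2 with h2 | h2 | h2
    · exact absurd (hf.2 p.swap hps q.swap hqs h2)
        (by simp only [Prod.snd_swap, h1]; exact lt_irrefl _)
    · exact Prod.ext h1 h2
    · exact absurd (hf.2 q.swap hqs p.swap hps h2)
        (by simp only [Prod.snd_swap, h1]; exact lt_irrefl _)
  · intro p hp q hq h1
    exact hf.fst_lt_of_snd_lt ((hmem q).mp hq) ((hmem p).mp hp) h1

def transPt (x : XP) : XP := ⟨transFn x.1, transFn_mem x.2⟩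

lemma continuous_transPt : Continuous transPt := by
  apply Continuous.subtype_mk
  apply continuous_pi
  intro q
  exact (continuous_apply q.swap).comp continuous_subtype_val

lemma transPt_injective : Function.Injective transPt := by
  intro x y h
  have : transFn x.1 = transFn y.1 := congrArg Subtype.val h
  have := congrArg transFn this
  rw [transFn_transFn, transFn_transFn] at this
  exact Subtype.ext this

lemma transPt_surjective : Function.Surjective transPt := by
  intro y
  exact ⟨transPt y, Subtype.ext (transFn_transFn y.1)⟩

lemma isEmbedding_transPt : IsEmbedding transPt :=
  (continuous_transPt.isClosedEmbedding transPt_injective).toIsEmbedding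
-- Chunk 5: analysis infrastructure
section Analysis
variable {H : Type u} [NormedAddCommGroup H] [InnerProductSpace ℝ H]

/-- The identity map from `H` with its weak topology to `H`. -/
def toH (y : WeakSpace ℝ H) : H := y

lemma toH_injective : Function.Injective (toH (H := H)) := fun _ _ h => h

lemma continuous_inner_weak (v : H) :
    Continuous fun y : WeakSpace ℝ H => (inner ℝ v (toH y) : ℝ) := by
  have h := WeakBilin.eval_continuous ((topDualPairing ℝ H).flip) (innerSL ℝ v)
  exact h

lemma exists_norm_bound [CompleteSpace H] (ψ : XP → WeakSpace ℝ H) (hc : Continuous ψ) :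
    ∃ C : ℝ, 1 ≤ C ∧ ∀ x, ‖toH (ψ x)‖ ≤ C := by
  set g : XP → H →L[ℝ] ℝ := fun x => innerSL ℝ (toH (ψ x)) with hg
  have hpt : ∀ v : H, ∃ C, ∀ x, ‖g x v‖ ≤ C := by
    intro v
    have hcont : Continuous fun x : XP => ‖(inner ℝ v (toH (ψ x)) : ℝ)‖ :=
      ((continuous_inner_weak v).comp hc).norm
    obtain ⟨C, hC⟩ := (isCompact_range hcont).bddAbove
    refine ⟨C, fun x => ?_⟩
    have : ‖(inner ℝ v (toH (ψ x)) : ℝ)‖ ≤ C := hC ⟨x, rfl⟩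
    simpa [hg, real_inner_comm] using this
  obtain ⟨C', hC'⟩ := banach_steinhaus hpt
  refine ⟨max C' 1, le_max_right _ _, fun x => ?_⟩
  have : ‖g x‖ = ‖toH (ψ x)‖ := by
    rw [hg]
    exact innerSL_apply_norm (𝕜 := ℝ) _
  rw [← this]
  exact le_trans (hC' x) (le_max_left _ _)

lemma weak_nbhd (w₀ : WeakSpace ℝ H) {m : ℕ} (v : Fin m → H) {η : ℝ} (hη : 0 < η) :
    {y : WeakSpace ℝ H | ∀ i, |(inner ℝ (v i) (toH y - toH w₀) : ℝ)| < η} ∈ 𝓝 w₀ := by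
  have heq : {y : WeakSpace ℝ H | ∀ i, |(inner ℝ (v i) (toH y - toH w₀) : ℝ)| < η} =
      ⋂ i, (fun y : WeakSpace ℝ H => (inner ℝ (v i) (toH y) : ℝ)) ⁻¹'
        Metric.ball (inner ℝ (v i) (toH w₀) : ℝ) η := by
    ext y
    simp only [Set.mem_setOf_eq, Set.mem_iInter, Set.mem_preimage, Metric.mem_ball,
      Real.dist_eq, inner_sub_right]
  rw [heq]
  refine Filter.iInter_mem.mpr fun i => ?_
  have hopen := (continuous_inner_weak (v i)).isOpen_preimage
    (Metric.ball (inner ℝ (v i) (toH w₀) : ℝ) η) Metric.isOpen_ball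
  refine hopen.mem_nhds ?_
  simp [hη]

variable (ψ : XP → WeakSpace ℝ H)

/-- The set of coordinates `s` such that removing `s` always moves the image under `ψ`
by at least `1/(n+1)`. -/
def SnSet (n : ℕ) : Set (Omega1 × Omega1) :=
  {s | ∀ x : XP, x.1 s = true → 1 / (n + 1 : ℝ) ≤ ‖toH (ψ x) - toH (ψ (removePt s x))‖}

lemma exists_mem_snSet (hemb : IsEmbedding ψ) (s : Omega1 × Omega1) :
    ∃ n, s ∈ SnSet ψ n := by
  by_contra hcon
  push_neg at hcon
  simp only [SnSet, Set.mem_setOf_eq, not_forall, not_le] at hcon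
  choose xs hxs hsmall using hcon
  have hKclosed : IsClosed {x : XP | x.1 s = true} := by
    have : {x : XP | x.1 s = true} =
        ((fun x : XP => x.1 s) ⁻¹' {true}) := rfl
    rw [this]
    exact (isClosed_discrete {true}).preimage
      ((continuous_apply s).comp continuous_subtype_val)
  have hK : IsCompact {x : XP | x.1 s = true} := hKclosed.isCompact
  have hle : Filter.map xs Filter.atTop ≤ Filter.principal {x : XP | x.1 s = true} := by
    rw [Filter.le_principal_iff, Filter.mem_map]
    exact Filter.Eventually.of_forall fun n => hxs n
  obtain ⟨a, haK, hcl⟩ := hK.exists_clusterPt hle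
  set v : H := toH (ψ a) - toH (ψ (removePt s a)) with hv
  have hvzero : v = 0 := by
    by_contra hvne
    have hnorm : (0 : ℝ) < ‖v‖ := norm_pos_iff.mpr hvne
    set g : XP → ℝ := fun x => inner ℝ v (toH (ψ x) - toH (ψ (removePt s x))) with hgdef
    have hgcont : Continuous g := by
      have h1 : Continuous fun x : XP => (inner ℝ v (toH (ψ x)) : ℝ) :=
        (continuous_inner_weak v).comp (hemb.continuous)
      have h2 : Continuous fun x : XP => (inner ℝ v (toH (ψ (removePt s x))) : ℝ) :=
        (continuous_inner_weak v).comp (hemb.continuous.comp (continuous_removePt s))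
      have : g = fun x => (inner ℝ v (toH (ψ x)) : ℝ) - inner ℝ v (toH (ψ (removePt s x))) := by
        funext x
        simp [hgdef, inner_sub_right]
      rw [this]
      exact h1.sub h2
    have hga : g a = ‖v‖ ^ 2 := by
      simp [hgdef, ← hv, real_inner_self_eq_norm_sq]
    have hU : {x : XP | ‖v‖ ^ 2 / 2 < g x} ∈ 𝓝 a := by
      have : IsOpen {x : XP | ‖v‖ ^ 2 / 2 < g x} := isOpen_lt continuous_const hgcont
      refine this.mem_nhds ?_
      simp only [Set.mem_setOf_eq, hga]
      nlinarith
    have hfreq : ∃ᶠ n in Filter.atTop, ‖v‖ ^ 2 / 2 < g (xs n) := by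
      have h1 := ((Filter.basis_sets (𝓝 a)).clusterPt_iff_frequently).mp hcl _ hU
      rw [Filter.frequently_map] at h1
      exact h1
    have hev : ∀ᶠ n : ℕ in Filter.atTop, 1 / (n + 1 : ℝ) < ‖v‖ / 2 :=
      tendsto_one_div_add_atTop_nhds_zero_nat.eventually_lt_const (by positivity)
    obtain ⟨n, hn1, hn2⟩ := (hfreq.and_eventually hev).exists
    have hCS : |g (xs n)| ≤ ‖v‖ * ‖toH (ψ (xs n)) - toH (ψ (removePt s (xs n)))‖ :=
      abs_real_inner_le_norm _ _
    have hsm := hsmall n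
    have hd0 : (0:ℝ) ≤ ‖toH (ψ (xs n)) - toH (ψ (removePt s (xs n)))‖ := norm_nonneg _
    nlinarith [le_abs_self (g (xs n))]
  have : ψ a = ψ (removePt s a) := toH_injective (by rwa [sub_eq_zero] at hvzero)
  have haeq : a = removePt s a := hemb.injective this
  have : a.1 s = (removePt s a).1 s := congrFun (congrArg Subtype.val haeq) s
  rw [removePt_val_apply] at this
  simp only [if_pos rfl] at this
  rw [haK] at this
  simp at this

end Analysis
-- Chunk 6a: sigma-ideal argument and SnSet under transpose
section Sigma
variable {H : Type u} [NormedAddCommGroup H] [InnerProductSpace ℝ H]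

lemma exists_sn_not_ideal (ψ : XP → WeakSpace ℝ H) (hemb : IsEmbedding ψ) :
    ∃ n, ¬ MemIdealI (SnSet ψ n) := by
  by_contra hcon
  push_neg at hcon
  simp only [MemIdealI] at hcon
  have hT : (⋃ n, {α : Omega1 |
      ¬((vertSection (SnSet ψ n) α).Countable ∧ (horSection (SnSet ψ n) α).Countable)}).Countable :=
    Set.countable_iUnion hcon
  have : ¬ (Set.univ : Set Omega1) ⊆ (⋃ n, {α : Omega1 |
      ¬((vertSection (SnSet ψ n) α).Countable ∧ (horSection (SnSet ψ n) α).Countable)}) := by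
    intro hsub
    exact omega1_not_countable (hT.mono hsub)
  obtain ⟨α, -, hα⟩ := Set.not_subset.mp this
  simp only [Set.mem_iUnion, Set.mem_setOf_eq, not_exists, not_not] at hα
  have hcover : (Set.univ : Set Omega1) ⊆ ⋃ n, vertSection (SnSet ψ n) α := by
    intro β _
    obtain ⟨n, hn⟩ := exists_mem_snSet ψ hemb (α, β)
    exact Set.mem_iUnion.mpr ⟨n, hn⟩
  exact omega1_not_countable ((Set.countable_iUnion (fun n => (hα n).1)).mono hcover)

lemma transPt_removePt (s : Omega1 × Omega1) (x : XP) :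
    transPt (removePt s x) = removePt s.swap (transPt x) := by
  apply Subtype.ext
  funext q
  show (if q.swap = s then false else x.1 q.swap) = (if q = s.swap then false else x.1 q.swap)
  have : q.swap = s ↔ q = s.swap := by
    constructor
    · rintro rfl; exact (Prod.swap_swap q).symm
    · rintro rfl; exact Prod.swap_swap s
  by_cases h : q = s.swap
  · rw [if_pos (this.mpr h), if_pos h]
  · rw [if_neg (fun hh => h (this.mp hh)), if_neg h]

lemma snSet_comp_transPt (ψ : XP → WeakSpace ℝ H) (n : ℕ) (s : Omega1 × Omega1) :
    s ∈ SnSet (ψ ∘ transPt) n ↔ s.swap ∈ SnSet ψ n := by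
  constructor
  · intro h y hy
    have hx : (transPt y).1 s = true := by
      show y.1 s.swap = true
      exact hy
    have := h (transPt y) hx
    rw [Function.comp_apply, Function.comp_apply, transPt_removePt] at this
    have he : transPt (transPt y) = y := Subtype.ext (transFn_transFn y.1)
    rwa [he] at this
  · intro h x hx
    have hy : (transPt x).1 s.swap = true := by
      show x.1 s.swap.swap = true
      rwa [Prod.swap_swap]
    have := h (transPt x) hy
    rw [Function.comp_apply, Function.comp_apply, transPt_removePt]
    exact this

lemma vert_snSet_transPt (ψ : XP → WeakSpace ℝ H) (n : ℕ) (α : Omega1) :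
    vertSection (SnSet (ψ ∘ transPt) n) α = horSection (SnSet ψ n) α := by
  ext β
  show (α, β) ∈ SnSet (ψ ∘ transPt) n ↔ (β, α) ∈ SnSet ψ n
  rw [snSet_comp_transPt]
  rfl

end Sigma

-- mkXP helper
lemma decCond_empty : DecCond (∅ : Set (Omega1 × Omega1)) := by
  constructor <;> intro p hp <;> exact absurd hp (Set.notMem_empty p)

def mkXP (F : Set (Omega1 × Omega1)) : XP :=
  if h : DecCond F then ⟨chi F, chi_mem_xSpace h⟩ else ⟨chi ∅, chi_mem_xSpace decCond_empty⟩

lemma mkXP_val {F : Set (Omega1 × Omega1)} (h : DecCond F) : (mkXP F).1 = chi F := by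
  rw [mkXP, dif_pos h]
-- Chunk 7: Fset infrastructure
def Fset (g : ℕ → Omega1 × Omega1) (m : ℕ) : Set (Omega1 × Omega1) := g '' Set.Iio m

lemma decCond_fset {g : ℕ → Omega1 × Omega1} {m : ℕ}
    (h1 : ∀ i j, i < j → j < m → (g j).1 < (g i).1)
    (h2 : ∀ i j, i < j → j < m → (g i).2 < (g j).2) : DecCond (Fset g m) := by
  constructor
  · rintro p ⟨i, hi, rfl⟩ q ⟨j, hj, rfl⟩ heq
    rcases lt_trichotomy i j with h | h | h
    · exact absurd heq (ne_of_gt (h1 i j h hj))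
    · rw [h]
    · exact absurd heq.symm (ne_of_gt (h1 j i h hi))
  · rintro p ⟨i, hi, rfl⟩ q ⟨j, hj, rfl⟩ hlt
    rcases lt_trichotomy i j with h | h | h
    · exact absurd hlt (not_lt.mpr (le_of_lt (h1 i j h hj)))
    · subst h; exact absurd hlt (lt_irrefl _)
    · exact h2 j i h hi

lemma fset_update_le (g : ℕ → Omega1 × Omega1) (m : ℕ) (p : Omega1 × Omega1) {j : ℕ}
    (hj : j ≤ m) : Fset (Function.update g m p) j = Fset g j := by
  unfold Fset
  apply Set.image_congr
  intro i hi
  have hi' : i < j := hi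
  exact Function.update_of_ne (by omega : i ≠ m) _ _

lemma fset_update_succ (g : ℕ → Omega1 × Omega1) (m : ℕ) (p : Omega1 × Omega1) :
    Fset (Function.update g m p) (m + 1) = insert p (Fset g m) := by
  have hIio : Set.Iio (m + 1) = insert m (Set.Iio m) := by
    ext i
    simp only [Set.mem_Iio, Set.mem_insert_iff]
    omega
  have h1 : Fset (Function.update g m p) (m + 1) =
      Function.update g m p '' insert m (Set.Iio m) := by
    unfold Fset
    rw [hIio]
  rw [h1, Set.image_insert_eq, Function.update_self]
  congr 1
  exact fset_update_le g m p (le_refl m)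

lemma not_mem_fset {g : ℕ → Omega1 × Omega1} {m : ℕ} {p : Omega1 × Omega1}
    (hp : ∀ j < m, (g j).1 ≠ p.1) : p ∉ Fset g m := by
  rintro ⟨j, hj, rfl⟩
  exact hp j hj rfl
-- Chunk 8: the main case lemma
section CaseA
variable {H : Type u} [NormedAddCommGroup H] [InnerProductSpace ℝ H] [CompleteSpace H]

set_option maxHeartbeats 2000000 in
lemma caseA (ψ : XP → WeakSpace ℝ H) (hemb : IsEmbedding ψ) (n : ℕ)
    (hinf : {α : Omega1 | ¬ (vertSection (SnSet ψ n) α).Countable}.Infinite) : False := by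
  classical
  obtain ⟨C, hC1, hC⟩ := exists_norm_bound ψ hemb.continuous
  set B : Set (Omega1 × Omega1) := SnSet ψ n with hBdef
  set δ : ℝ := 1 / ((n : ℝ) + 1) with hδdef
  have hδ : 0 < δ := by positivity
  set k : ℕ := ⌈8 * C ^ 2 / δ ^ 2⌉₊ + 1 with hkdef
  have hk0 : 0 < k := Nat.succ_pos _
  set η : ℝ := δ ^ 2 / (2 * k) with hηdef
  have hη : 0 < η := by positivity
  -- columns with uncountable vertical sections
  obtain ⟨t, htsub, htcard⟩ := hinf.exists_subset_card_eq k
  set e := t.orderIsoOfFin htcard with hedef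
  set col : ℕ → Omega1 := fun i =>
    if h : i < k then (e ⟨k - 1 - i, by omega⟩ : Omega1) else (e ⟨0, hk0⟩ : Omega1) with hcoldef
  have hcoldec : ∀ i j, i < j → j < k → col j < col i := by
    intro i j hij hj
    simp only [hcoldef, dif_pos hj, dif_pos (by omega : i < k)]
    have : (⟨k - 1 - j, by omega⟩ : Fin k) < ⟨k - 1 - i, by omega⟩ := by
      simp only [Fin.mk_lt_mk]
      omega
    exact Subtype.coe_lt_coe.mpr (e.strictMono this)
  have hcoluc : ∀ i, i < k → ¬ (vertSection B (col i)).Countable := by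
    intro i hi
    simp only [hcoldef, dif_pos hi]
    exact htsub (Finset.mem_coe.mpr (e ⟨k - 1 - i, by omega⟩).2)
  -- the main recursion
  have key : ∀ m, m ≤ k → ∃ g : ℕ → Omega1 × Omega1,
      (∀ j, j < m → (g j).1 = col j ∧ g j ∈ B) ∧
      (∀ i j, i < j → j < m → (g i).2 < (g j).2) ∧
      (∀ j, j < m →
        δ ≤ ‖toH (ψ (mkXP (Fset g (j+1)))) - toH (ψ (mkXP (Fset g j)))‖ ∧
        ∀ i, i < j →
          |(inner ℝ (toH (ψ (mkXP (Fset g (i+1)))) - toH (ψ (mkXP (Fset g i))))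
              (toH (ψ (mkXP (Fset g (j+1)))) - toH (ψ (mkXP (Fset g j)))) : ℝ)| ≤ η) := by
    intro m
    induction m with
    | zero =>
      intro _
      refine ⟨fun _ => ((e ⟨0, hk0⟩ : Omega1), (e ⟨0, hk0⟩ : Omega1)), ?_, ?_, ?_⟩
      · intro j hj; omega
      · intro i j hij hj; omega
      · intro j hj; omega
    | succ m IH =>
      intro hm1
      obtain ⟨g, hg1, hg2, hg3⟩ := IH (by omega)
      have hmk : m < k := hm1
      have hfst : ∀ i j, i < j → j < m → (g j).1 < (g i).1 := by
        intro i j hij hj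
        rw [(hg1 j hj).1, (hg1 i (by omega)).1]
        exact hcoldec i j hij (by omega)
      have hdec : ∀ j, j ≤ m → DecCond (Fset g j) := fun j hj => decCond_fset
        (fun i i' h h' => hfst i i' h (by omega)) (fun i i' h h' => hg2 i i' h (by omega))
      set x0 : XP := mkXP (Fset g m) with hx0def
      set v : Fin m → H := fun i =>
        toH (ψ (mkXP (Fset g ((i : ℕ)+1)))) - toH (ψ (mkXP (Fset g (i : ℕ)))) with hvdef
      have hU := weak_nbhd (ψ x0) v hη
      have hpre : ψ ⁻¹' {y : WeakSpace ℝ H |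
          ∀ i : Fin m, |(inner ℝ (v i) (toH y - toH (ψ x0)) : ℝ)| < η} ∈ 𝓝 x0 :=
        hemb.continuous.continuousAt.preimage_mem_nhds hU
      obtain ⟨I, hI⟩ := exists_finset_nbhd x0 hpre
      -- choose the new second coordinate β
      set bad : Set Omega1 :=
        (⋃ j ∈ Set.Iio m, Set.Iic ((g j).2)) ∪ {β : Omega1 | ((col m), β) ∈ I} with hbaddef
      have hbadc : bad.Countable := by
        apply Set.Countable.union
        · exact Set.Countable.biUnion (Set.to_countable _) (fun j _ => Iic_countable _)
        · refine Set.Finite.countable (Set.Finite.subset (I.finite_toSet.image Prod.snd) ?_)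
          rintro β hβ
          exact ⟨(col m, β), hβ, rfl⟩
      have hnon : (vertSection B (col m) \ bad).Nonempty := by
        rcases (vertSection B (col m) \ bad).eq_empty_or_nonempty with hne | hne
        · exact absurd (hbadc.mono (Set.diff_eq_empty.mp hne)) (hcoluc m hmk)
        · exact hne
      obtain ⟨β, hβB, hβbad⟩ := hnon
      have hβgt : ∀ j, j < m → (g j).2 < β := by
        intro j hj
        by_contra hle
        exact hβbad (Or.inl (Set.mem_biUnion hj (not_lt.mp hle)))
      have hβI : ((col m), β) ∉ I := fun h => hβbad (Or.inr h)
      set p : Omega1 × Omega1 := (col m, β) with hpdef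
      set g' : ℕ → Omega1 × Omega1 := Function.update g m p with hg'def
      have hg'eq : ∀ j, j ≠ m → g' j = g j := fun j hj => Function.update_of_ne hj _ _
      have hg'm : g' m = p := Function.update_self _ _ _
      have hFle : ∀ j, j ≤ m → Fset g' j = Fset g j := fun j hj => fset_update_le g m p hj
      have hfst' : ∀ i j, i < j → j < m + 1 → (g' j).1 < (g' i).1 := by
        intro i j hij hj
        rcases Nat.lt_or_ge j m with hjm | hjm
        · rw [hg'eq j (by omega), hg'eq i (by omega)]
          exact hfst i j hij hjm
        · have hjeq : j = m := by omega
          rw [hjeq, hg'm, hg'eq i (by omega)]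
          rw [(hg1 i (by omega)).1]
          exact hcoldec i m (by omega) hmk
      have hsnd' : ∀ i j, i < j → j < m + 1 → (g' i).2 < (g' j).2 := by
        intro i j hij hj
        rcases Nat.lt_or_ge j m with hjm | hjm
        · rw [hg'eq j (by omega), hg'eq i (by omega)]
          exact hg2 i j hij hjm
        · have hjeq : j = m := by omega
          rw [hjeq, hg'm, hg'eq i (by omega)]
          exact hβgt i (by omega)
      have hdec' : DecCond (Fset g' (m+1)) := decCond_fset hfst' hsnd'
      have hpnotmem : p ∉ Fset g m := by
        apply not_mem_fset
        intro j hj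
        rw [(hg1 j hj).1]
        exact ne_of_gt (hcoldec j m hj hmk)
      set y : XP := mkXP (Fset g' (m+1)) with hydef
      have hyval : y.1 = chi (insert p (Fset g m)) := by
        rw [hydef, mkXP_val hdec', fset_update_succ]
      have hx0val : x0.1 = chi (Fset g m) := mkXP_val (hdec m (le_refl m))
      have hagree : ∀ q ∈ I, y.1 q = x0.1 q := by
        intro q hq
        have hqp : q ≠ p := fun h => hβI (h ▸ hq)
        rw [hyval, hx0val]
        simp only [chi, Set.mem_insert_iff]
        by_cases hmem : q ∈ Fset g m
        · simp [hmem]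
        · simp [hmem, hqp]
      have hyU : ∀ i : Fin m, |(inner ℝ (v i) (toH (ψ y) - toH (ψ x0)) : ℝ)| < η :=
        hI y hagree
      have hyp : y.1 p = true := by
        rw [hyval]
        simp [chi]
      have hremove : removePt p y = x0 := by
        apply Subtype.ext
        funext q
        rw [removePt_val_apply, hyval, hx0val]
        by_cases hqp : q = p
        · subst hqp
          simp [chi, hpnotmem]
        · rw [if_neg hqp]
          by_cases hmem : q ∈ Fset g m
          · simp [chi, hmem, hqp]
          · simp [chi, hmem, hqp]
      have hnormnew : δ ≤ ‖toH (ψ y) - toH (ψ x0)‖ := by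
        have hmem : ∀ x : XP, x.1 p = true →
            1 / ((n : ℝ) + 1) ≤ ‖toH (ψ x) - toH (ψ (removePt p x))‖ := hβB
        have := hmem y hyp
        rwa [hremove, ← hδdef] at this
      refine ⟨g', ?_, ?_, ?_⟩
      · intro j hj
        rcases Nat.lt_or_ge j m with hjm | hjm
        · rw [hg'eq j (by omega)]
          exact hg1 j hjm
        · have hjeq : j = m := by omega
          rw [hjeq, hg'm]
          exact ⟨rfl, hβB⟩
      · exact fun i j hij hj => hsnd' i j hij hj
      · intro j hj
        rcases Nat.lt_or_ge j m with hjm | hjm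
        · -- old indices: everything unchanged
          have e1 : Fset g' (j+1) = Fset g (j+1) := hFle (j+1) (by omega)
          have e2 : Fset g' j = Fset g j := hFle j (by omega)
          constructor
          · rw [e1, e2]
            exact (hg3 j hjm).1
          · intro i hij
            have e3 : Fset g' (i+1) = Fset g (i+1) := hFle (i+1) (by omega)
            have e4 : Fset g' i = Fset g i := hFle i (by omega)
            rw [e1, e2, e3, e4]
            exact (hg3 j hjm).2 i hij
        · have hjeq : j = m := by omega
          subst hjeq
          have e2 : Fset g' j = Fset g j := hFle j (by omega)
          constructor
          · rw [e2]
            exact hnormnew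
          · intro i hij
            have e3 : Fset g' (i+1) = Fset g (i+1) := hFle (i+1) (by omega)
            have e4 : Fset g' i = Fset g i := hFle i (by omega)
            rw [e2, e3, e4]
            exact le_of_lt (hyU ⟨i, hij⟩)
  -- extract the contradiction
  obtain ⟨g, hg1, hg2, hg3⟩ := key k (le_refl k)
  set f : ℕ → H := fun j => toH (ψ (mkXP (Fset g j))) with hfdef
  set w : ℕ → H := fun j => f (j+1) - f j with hwdef
  have htel : ∑ i ∈ Finset.range k, w i = f k - f 0 := Finset.sum_range_sub f k
  have hns : ∀ j, j < k → δ ≤ ‖w j‖ := fun j hj => (hg3 j hj).1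
  have hip : ∀ i j, i < k → j < k → i ≠ j → |(inner ℝ (w i) (w j) : ℝ)| ≤ η := by
    intro i j hi hj hne
    rcases Nat.lt_or_ge i j with h | h
    · exact (hg3 j hj).2 i h
    · have hji : j < i := by omega
      have := (hg3 i hi).2 j hji
      rwa [real_inner_comm] at this
  have hbound : ‖f k - f 0‖ ≤ 2 * C := by
    calc ‖f k - f 0‖ ≤ ‖f k‖ + ‖f 0‖ := norm_sub_le _ _
    _ ≤ C + C := add_le_add (hC _) (hC _)
    _ = 2 * C := by ring
  have hw2 : ‖f k - f 0‖ ^ 2 =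
      ∑ i ∈ Finset.range k, ∑ j ∈ Finset.range k, (inner ℝ (w i) (w j) : ℝ) := by
    rw [← htel, ← real_inner_self_eq_norm_sq, sum_inner]
    refine Finset.sum_congr rfl fun i _ => ?_
    rw [inner_sum]
  have hrow : ∀ i ∈ Finset.range k,
      δ ^ 2 - (k : ℝ) * η ≤ ∑ j ∈ Finset.range k, (inner ℝ (w i) (w j) : ℝ) := by
    intro i hi
    have hik : i < k := Finset.mem_range.mp hi
    rw [← Finset.add_sum_erase (Finset.range k) _ hi]
    have hdiag : δ ^ 2 ≤ (inner ℝ (w i) (w i) : ℝ) := by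
      rw [real_inner_self_eq_norm_sq]
      have := hns i hik
      nlinarith [norm_nonneg (w i)]
    have hoff : -((k : ℝ) * η) ≤ ∑ j ∈ (Finset.range k).erase i, (inner ℝ (w i) (w j) : ℝ) := by
      have h1 : ∀ j ∈ (Finset.range k).erase i, -η ≤ (inner ℝ (w i) (w j) : ℝ) := by
        intro j hj
        have hjk : j < k := Finset.mem_range.mp (Finset.mem_of_mem_erase hj)
        have hne : i ≠ j := fun h => (Finset.ne_of_mem_erase hj) h.symm
        have := hip i j hik hjk hne
        have habs := neg_abs_le (inner ℝ (w i) (w j) : ℝ)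
        linarith
      calc -((k : ℝ) * η) ≤ ((Finset.range k).erase i).card • (-η) := by
            rw [nsmul_eq_mul]
            have hcard : (((Finset.range k).erase i).card : ℝ) ≤ k := by
              have := Finset.card_erase_le (s := Finset.range k) (a := i)
              rw [Finset.card_range] at this
              exact_mod_cast le_trans this (le_refl k)
            nlinarith
      _ ≤ ∑ j ∈ (Finset.range k).erase i, (inner ℝ (w i) (w j) : ℝ) :=
            Finset.card_nsmul_le_sum _ _ _ h1
    linarith
  have hlow : (k : ℝ) * δ ^ 2 - (k : ℝ) ^ 2 * η ≤ ‖f k - f 0‖ ^ 2 := by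
    rw [hw2]
    calc (k : ℝ) * δ ^ 2 - (k : ℝ) ^ 2 * η
        = ∑ _i ∈ Finset.range k, (δ ^ 2 - (k : ℝ) * η) := by
          rw [Finset.sum_const, Finset.card_range, nsmul_eq_mul]
          ring
    _ ≤ _ := Finset.sum_le_sum hrow
  have hupper : ‖f k - f 0‖ ^ 2 ≤ (2 * C) ^ 2 := by
    have := hbound
    nlinarith [norm_nonneg (f k - f 0)]
  have hkη : (k : ℝ) ^ 2 * η = (k : ℝ) * δ ^ 2 / 2 := by
    rw [hηdef]
    have hkne : (k : ℝ) ≠ 0 := by positivity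
    field_simp
  have hfin : (k : ℝ) * δ ^ 2 / 2 ≤ 4 * C ^ 2 := by nlinarith
  have hkbig : 8 * C ^ 2 / δ ^ 2 < (k : ℝ) := by
    calc 8 * C ^ 2 / δ ^ 2 ≤ (⌈8 * C ^ 2 / δ ^ 2⌉₊ : ℝ) := Nat.le_ceil _
    _ < (k : ℝ) := by
        rw [hkdef]
        push_cast
        linarith
  have hk8 : (k : ℝ) ≤ 8 * C ^ 2 / δ ^ 2 := by
    rw [le_div_iff₀ (by positivity : (0:ℝ) < δ ^ 2)]
    linarith
  linarith

end CaseA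
/-- The space `𝒳` is not a uniform Eberlein compactum: there is no Hilbert space `H`
and no topological embedding of `𝒳` into `H` equipped with its weak topology. -/
theorem XSpace_not_uniformEberlein
    (H : Type u) [NormedAddCommGroup H] [InnerProductSpace ℝ H] [CompleteSpace H]
    (φ : ↥(XSpace Omega1) → WeakSpace ℝ H) :
    ¬ IsEmbedding φ := by
  intro hemb
  obtain ⟨n, hni⟩ := exists_sn_not_ideal φ hemb
  have hbad : ¬ {α : Omega1 | ¬ ((vertSection (SnSet φ n) α).Countable ∧
      (horSection (SnSet φ n) α).Countable)}.Countable := hni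
  have hsub : {α : Omega1 | ¬ ((vertSection (SnSet φ n) α).Countable ∧
      (horSection (SnSet φ n) α).Countable)} ⊆
      {α : Omega1 | ¬ (vertSection (SnSet φ n) α).Countable} ∪
      {α : Omega1 | ¬ (horSection (SnSet φ n) α).Countable} := by
    intro α hα
    exact not_and_or.mp hα
  by_cases hV : {α : Omega1 | ¬ (vertSection (SnSet φ n) α).Countable}.Infinite
  · exact caseA φ hemb n hV
  · have hVfin := Set.not_infinite.mp hV
    have hHs : {α : Omega1 | ¬ (horSection (SnSet φ n) α).Countable}.Infinite := by
      by_contra hh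
      have hHfin := Set.not_infinite.mp hh
      exact hbad ((hVfin.countable.union hHfin.countable).mono hsub)
    have hemb2 : IsEmbedding (φ ∘ transPt) := hemb.comp isEmbedding_transPt
    apply caseA (φ ∘ transPt) hemb2 n
    have heq : {α : Omega1 | ¬ (vertSection (SnSet (φ ∘ transPt) n) α).Countable} =
        {α : Omega1 | ¬ (horSection (SnSet φ n) α).Countable} := by
      ext α
      rw [Set.mem_setOf_eq, Set.mem_setOf_eq, vert_snSet_transPt]
    rw [heq]
    exact hHs

end
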